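/- arXiv:math/0005076 — 3 statements merged into one kernel-verified Lean document; each statement's English description precedes it below -/
import Mathlib

section
/- With P_s defined by the stated recurrence, for natural numbers i_1, i_2, j_1 with j_1 ≥ 1, the symmetrized sum P_s(i_1,i_2; j_1,0) + P_s(i_2,i_1; 0,j_1) equals 0 if s ≥ i_1 + j_1, and equals C(s,j_1) if s < i_1 + j_1. -/
/-- Binomial coefficient `C(a,b)` extended to integer top argument:
`C(a,b) = 0` when `a < 0` (and automatically `0` when `b > a ≥ 0`). -/
def Cz (a : ℤ) (b : ℕ) : ℚ := if 0 ≤ a then ((a.toNat).choose b : ℚ) else 0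

/-- `Pmat s cols` is the quantity `P_s` of the paper applied to the two-rowed
matrix whose columns are the pairs `(i, j)` in the list `cols`, defined by the
recurrence (1)–(3) of Section 2 (case (2) `P_s(i;j) = C(s,j)` for `j > 0` is the
instance `n = 1` of case (3), since the correction sum is then empty). -/
def Pmat (s : ℕ) (cols : List (ℕ × ℕ)) : ℚ :=
  if cols.all (fun c => c.2 = 0) then 0
  else
    ((cols.length.factorial : ℚ))⁻¹ * Cz (s : ℤ) ((cols.map Prod.snd).sum)
      * (((cols.map Prod.snd).sum.factorial : ℚ))
      / ((cols.map (fun c => ((c.2.factorial : ℚ)))).prod)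
    - ∑ q ∈ (Finset.Ico 1 cols.length).attach,
        Pmat s (cols.take q.1)
        * (((cols.length - q.1).factorial : ℚ))⁻¹
        * Cz ((s : ℤ) - ((cols.take q.1).map (fun c => (c.1 : ℤ) + (c.2 : ℤ))).sum)
             (((cols.drop q.1).map Prod.snd).sum)
        * ((((cols.drop q.1).map Prod.snd).sum.factorial : ℚ))
        / (((cols.drop q.1).map (fun c => ((c.2.factorial : ℚ)))).prod)
termination_by cols.length
decreasing_by
  have hq := Finset.mem_Ico.mp q.2
  simp only [List.length_take]
  omega

lemma Pmat_single (s i j : ℕ) (hj : j ≠ 0) : Pmat s [(i,j)] = (s.choose j : ℚ) := by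
  rw [Pmat]
  simp only [List.all_cons, List.all_nil, decide_eq_true_eq, hj, if_false, Bool.and_true]
  rw [Finset.sum_eq_zero (fun x _ => absurd (Finset.mem_Ico.mp x.2) (by simp only [List.length_cons, List.length_nil]; omega))]
  simp [Cz, mul_div_assoc,
    div_self (by exact_mod_cast Nat.factorial_ne_zero j : (j.factorial:ℚ) ≠ 0)]

lemma Pmat_zero (s i : ℕ) : Pmat s [(i,0)] = 0 := by
  rw [Pmat]; simp

/-- for `j₁ ≥ 1`,
`P_s(i₁,i₂; j₁,0) + P_s(i₂,i₁; 0,j₁)` equals `0` if `s ≥ i₁ + j₁`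
and equals `C(s, j₁)` if `s < i₁ + j₁`. -/
theorem Pmat_pair (s i₁ i₂ j₁ : ℕ) (hj : 1 ≤ j₁) :
    Pmat s [(i₁, j₁), (i₂, 0)] + Pmat s [(i₂, 0), (i₁, j₁)] =
      if i₁ + j₁ ≤ s then 0 else (s.choose j₁ : ℚ) := by
  have hj' : j₁ ≠ 0 := by omega
  rw [Pmat, Pmat]
  simp only [List.length_cons, List.length_nil]
  have h2 : (Finset.Ico 1 2) = {1} := by decide
  rw [h2]
  rw [show ({1} : Finset ℕ).attach = {⟨1, Finset.mem_singleton_self 1⟩} from rfl]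
  rw [Finset.sum_singleton, Finset.sum_singleton]
  norm_num [Pmat_single s i₁ j₁ hj', Pmat_zero, hj', Cz]
  have hf : (j₁.factorial:ℚ) ≠ 0 := by exact_mod_cast Nat.factorial_ne_zero j₁
  simp only [mul_div_assoc, div_self hf, mul_one]
  by_cases h : i₁ + j₁ ≤ s
  · have h' : (i₁:ℤ) + (j₁:ℤ) ≤ (s:ℤ) := by exact_mod_cast h
    simp [h, h']; ring
  · have h' : ¬((i₁:ℤ) + (j₁:ℤ) ≤ (s:ℤ)) := by exact_mod_cast h
    simp [h, h']; ring
end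

section
/- Let m,k ≥ 1 and suppose j_1,...,j_m ≥ 1. Then the sum of P_s over all column permutations of the matrix with columns (i_1;j_1),...,(i_m;j_m),(i_{m+1};0),...,(i_{m+k};0) equals 0 if s ≥ i_1+...+i_m+j_1+...+j_m, and equals (1/k!)·(number of distinct column-orderings of ((i_{m+1},...,i_{m+k}) ; (0,...,0)))·(sum of P_s over all column permutations of the matrix with columns (i_1;j_1),...,(i_m;j_m)) if s < i_1+...+i_m+j_1+...+j_m. -/
/-- The set of matrices obtained from a matrix (list of columns) by permuting
its columns, as a `Finset` (so repeated matrices are counted once). -/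
def colPerms (M : List (ℕ × ℕ)) : Finset (List (ℕ × ℕ)) := M.permutations.toFinset

/-- `P_s[M]`: the sum of `P_s` over all matrices obtained from `M` by
permutation of columns. -/
def PmatSym (s : ℕ) (M : List (ℕ × ℕ)) : ℚ := ∑ N ∈ colPerms M, Pmat s N


/-- The finset of lists representing a multiset. -/
def Multiset.flists {α : Type*} [DecidableEq α] (M : Multiset α) : Finset (List α) :=
  M.lists.toFinset

namespace L21
open Finset

variable {α : Type*} [DecidableEq α]

lemma mem_lists {M : Multiset α} {l : List α} : l ∈ M.flists ↔ (l : Multiset α) = M := by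
  rw [Multiset.flists, Multiset.mem_toFinset, Multiset.mem_lists_iff, eq_comm]
  rfl

lemma lists_zero : (Multiset.flists (0 : Multiset α)) = {([] : List α)} := by
  ext l
  simp only [mem_lists, Finset.mem_singleton]
  constructor
  · intro h
    exact_mod_cast (Multiset.coe_eq_zero l).mp h
  · rintro rfl; rfl

lemma lists_eq_biUnion {M : Multiset α} (hM : M ≠ 0) :
    M.flists = M.toFinset.biUnion (fun a => (Multiset.flists (M.erase a)).image (a :: ·)) := by
  ext l
  simp only [mem_lists, Finset.mem_biUnion, Finset.mem_image, Multiset.mem_toFinset]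
  constructor
  · intro h
    cases l with
    | nil => exact absurd h.symm (by simpa using hM)
    | cons a t =>
      have ha : a ∈ M := by
        rw [← h]; simp
      refine ⟨a, ha, t, ?_, rfl⟩
      rw [← h]
      simp [Multiset.cons_coe]
  · rintro ⟨a, ha, t, ht, rfl⟩
    rw [← Multiset.cons_coe, Multiset.cons_eq_cons.2 (Or.inl ⟨rfl, ht⟩)]
    exact Multiset.cons_erase ha

lemma card_lists_eq_sum {M : Multiset α} (hM : M ≠ 0) :
    M.flists.card = ∑ a ∈ M.toFinset, (Multiset.flists (M.erase a)).card := by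
  rw [lists_eq_biUnion hM, Finset.card_biUnion]
  · exact Finset.sum_congr rfl fun a _ =>
      Finset.card_image_of_injective _ (fun x y h => by injection h)
  · intro x hx y hy hxy
    simp only [Finset.disjoint_left, Finset.mem_image]
    rintro l ⟨u, hu, rfl⟩ ⟨v, hv, hvl⟩
    exact hxy (by injection hvl with h1 h2; exact (h1.symm))


lemma card_lists_mul (M : Multiset α) :
    (M.flists.card : ℚ) * ∏ a ∈ M.toFinset, ((M.count a).factorial : ℚ)
      = ((Multiset.card M).factorial : ℚ) := by
  induction M using Multiset.strongInductionOn with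
  | ih M IH =>
  rcases eq_or_ne M 0 with rfl | hM
  · simp [lists_zero]
  · rw [card_lists_eq_sum hM]
    push_cast
    rw [Finset.sum_mul]
    have key : ∀ a ∈ M.toFinset,
        ((Multiset.flists (M.erase a)).card : ℚ) * ∏ x ∈ M.toFinset, ((M.count x).factorial : ℚ)
          = (M.count a : ℚ) * ((Multiset.card M - 1).factorial : ℚ) := by
      intro a ha
      have haM : a ∈ M := Multiset.mem_toFinset.mp ha
      have h1 : ∏ x ∈ M.toFinset, ((M.count x).factorial : ℚ)
          = (M.count a : ℚ) * ∏ x ∈ M.toFinset, (((M.erase a).count x).factorial : ℚ) := by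
        rw [← Finset.mul_prod_erase _ _ ha, ← Finset.mul_prod_erase _ (fun x => (((M.erase a).count x).factorial : ℚ)) ha]
        have hpos : 1 ≤ M.count a := Multiset.count_pos.mpr haM
        have hc : M.count a = ((M.erase a).count a) + 1 := by
          rw [Multiset.count_erase_self]; omega
        have heq : ∏ x ∈ M.toFinset.erase a, ((M.count x).factorial : ℚ)
            = ∏ x ∈ M.toFinset.erase a, (((M.erase a).count x).factorial : ℚ) := by
          refine Finset.prod_congr rfl fun x hx => ?_
          rw [Multiset.count_erase_of_ne (Finset.ne_of_mem_erase hx)]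
        rw [heq, hc, Nat.factorial_succ]
        push_cast
        ring
      have h2 : ∏ x ∈ M.toFinset, (((M.erase a).count x).factorial : ℚ)
          = ∏ x ∈ (M.erase a).toFinset, (((M.erase a).count x).factorial : ℚ) := by
        refine (Finset.prod_subset ?_ ?_).symm
        · exact Multiset.toFinset_subset.mpr (fun x hx => Multiset.mem_of_mem_erase hx)
        · intro x _ hx
          rw [Multiset.count_eq_zero_of_notMem (fun h => hx (Multiset.mem_toFinset.mpr h))]
          simp
      have h3 := IH (M.erase a) (Multiset.erase_lt.mpr haM)
      rw [Multiset.card_erase_of_mem haM] at h3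
      rw [h1, h2]
      calc ((Multiset.flists (M.erase a)).card : ℚ) * ((M.count a : ℚ) * ∏ x ∈ (M.erase a).toFinset, (((M.erase a).count x).factorial : ℚ))
          = (M.count a : ℚ) * (((Multiset.flists (M.erase a)).card : ℚ) * ∏ x ∈ (M.erase a).toFinset, (((M.erase a).count x).factorial : ℚ)) := by ring
        _ = (M.count a : ℚ) * ((Multiset.card M - 1).factorial : ℚ) := by rw [h3]; rfl
    rw [Finset.sum_congr rfl key]
    rw [← Finset.sum_mul]
    have : ∑ a ∈ M.toFinset, (M.count a : ℚ) = (Multiset.card M : ℚ) := by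
      rw [← Nat.cast_sum, Multiset.toFinset_sum_count_eq M]
    rw [this]
    obtain ⟨c, hc⟩ : ∃ c, Multiset.card M = c + 1 := by
      refine ⟨Multiset.card M - 1, ?_⟩
      have : Multiset.card M ≠ 0 := by simpa using hM
      omega
    rw [hc]
    push_cast [Nat.factorial_succ, Nat.add_sub_cancel]
    ring

lemma card_lists_add (R Z : Multiset α) (h : ∀ x ∈ R, x ∉ Z) :
    (((R + Z).flists.card : ℚ)) * ((Multiset.card R).factorial * (Multiset.card Z).factorial)
      = (R.flists.card : ℚ) * (Z.flists.card : ℚ) * ((Multiset.card R + Multiset.card Z).factorial : ℚ) := by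
  have hdisj : Disjoint R.toFinset Z.toFinset := by
    rw [Finset.disjoint_left]
    intro x hx hz
    exact h x (Multiset.mem_toFinset.mp hx) (Multiset.mem_toFinset.mp hz)
  have hprod : ∏ a ∈ (R + Z).toFinset, (((R + Z).count a).factorial : ℚ)
      = (∏ a ∈ R.toFinset, ((R.count a).factorial : ℚ)) * ∏ a ∈ Z.toFinset, ((Z.count a).factorial : ℚ) := by
    rw [Multiset.toFinset_add, Finset.prod_union hdisj]
    congr 1
    · refine Finset.prod_congr rfl fun x hx => ?_
      rw [Multiset.count_add, Multiset.count_eq_zero_of_notMem (h x (Multiset.mem_toFinset.mp hx)), add_zero]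
    · refine Finset.prod_congr rfl fun x hx => ?_
      have : x ∉ R := fun hr => h x hr (Multiset.mem_toFinset.mp hx)
      rw [Multiset.count_add, Multiset.count_eq_zero_of_notMem this, zero_add]
  have e1 := card_lists_mul (R + Z)
  have e2 := card_lists_mul R
  have e3 := card_lists_mul Z
  rw [hprod, Multiset.card_add] at e1
  rw [← e2, ← e3, ← e1]
  ring

def Jm (M : Multiset (ℕ×ℕ)) : ℕ := (M.map Prod.snd).sum
def Dm (M : Multiset (ℕ×ℕ)) : ℚ := (M.map (fun c => ((c.2.factorial : ℚ)))).prod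
def Sm (M : Multiset (ℕ×ℕ)) : ℤ := (M.map (fun c => (c.1:ℤ)+(c.2:ℤ))).sum
def Tm (s : ℕ) (M : Multiset (ℕ×ℕ)) : ℚ :=
  ((Multiset.card M).factorial : ℚ)⁻¹ * Cz (s:ℤ) (Jm M) * ((Jm M).factorial : ℚ) / Dm M
def co (s : ℕ) (Q R : Multiset (ℕ×ℕ)) : ℚ :=
  ((Multiset.card R).factorial : ℚ)⁻¹ * Cz ((s:ℤ) - Sm Q) (Jm R) * ((Jm R).factorial : ℚ) / Dm R

@[simp] lemma Jm_coe (N : List (ℕ×ℕ)) : Jm ↑N = (N.map Prod.snd).sum := by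
  simp [Jm]
@[simp] lemma Dm_coe (N : List (ℕ×ℕ)) : Dm ↑N = (N.map (fun c => ((c.2.factorial : ℚ)))).prod := by
  simp [Dm]
@[simp] lemma Sm_coe (N : List (ℕ×ℕ)) : Sm ↑N = (N.map (fun c => (c.1:ℤ)+(c.2:ℤ))).sum := by
  simp [Sm]

lemma Pmat_zero (s : ℕ) (N : List (ℕ×ℕ)) (h : ∀ c ∈ N, c.2 = 0) : Pmat s N = 0 := by
  rw [Pmat]
  rw [if_pos (by simpa [List.all_eq_true] using h)]

lemma Pmat_eq (s : ℕ) (N : List (ℕ×ℕ)) (h : ¬ ∀ c ∈ N, c.2 = 0) :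
    Pmat s N = Tm s ↑N
      - ∑ q ∈ Finset.Ico 1 N.length, Pmat s (N.take q) * co s ↑(N.take q) ↑(N.drop q) := by
  rw [Pmat, if_neg (by simpa [List.all_eq_true] using h)]
  have hT : Tm s (↑N : Multiset (ℕ×ℕ)) = ((N.length.factorial : ℚ))⁻¹ * Cz (s : ℤ) ((N.map Prod.snd).sum)
      * (((N.map Prod.snd).sum.factorial : ℚ))
      / ((N.map (fun c => ((c.2.factorial : ℚ)))).prod) := by
    simp [Tm, Multiset.coe_card]
  rw [hT]
  congr 1
  rw [← Finset.sum_attach (Finset.Ico 1 N.length)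
    (fun q => Pmat s (N.take q) * co s ↑(N.take q) ↑(N.drop q))]
  refine Finset.sum_congr rfl fun q hq => ?_
  simp only [co, Jm_coe, Dm_coe, Sm_coe, Multiset.coe_card, List.length_drop,
    List.map_take, List.map_drop]
  ring

def PS (s : ℕ) (M : Multiset (ℕ×ℕ)) : ℚ := ∑ N ∈ M.flists, Pmat s N

def subs (M : Multiset (ℕ×ℕ)) : Finset (Multiset (ℕ×ℕ)) :=
  M.powerset.toFinset.filter (fun Q => Q ≠ 0 ∧ Multiset.card Q < Multiset.card M)

def subsq (M : Multiset (ℕ×ℕ)) (q : ℕ) : Finset (Multiset (ℕ×ℕ)) :=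
  M.powerset.toFinset.filter (fun Q => Multiset.card Q = q)

lemma mem_subs {M Q : Multiset (ℕ×ℕ)} :
    Q ∈ subs M ↔ Q ≤ M ∧ Q ≠ 0 ∧ Multiset.card Q < Multiset.card M := by
  simp [subs, Multiset.mem_powerset, and_assoc]

lemma mem_subsq {M Q : Multiset (ℕ×ℕ)} {q : ℕ} :
    Q ∈ subsq M q ↔ Q ≤ M ∧ Multiset.card Q = q := by
  simp [subsq, Multiset.mem_powerset]

lemma sum_take_drop (M : Multiset (ℕ×ℕ)) (q : ℕ) (hq : q ≤ Multiset.card M)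
    (g : List (ℕ×ℕ) → List (ℕ×ℕ) → ℚ) :
    ∑ N ∈ M.flists, g (N.take q) (N.drop q)
      = ∑ Q ∈ subsq M q, ∑ u ∈ Q.flists, ∑ v ∈ (M - Q).flists, g u v := by
  have hsplit : ∀ N ∈ M.flists, (↑(N.take q) : Multiset (ℕ×ℕ)) + ↑(N.drop q) = M := by
    intro N hN
    rw [Multiset.coe_add, N.take_append_drop q]
    exact mem_lists.mp hN
  have himg : ∀ x ∈ M.flists, ∀ y ∈ M.flists,
      (fun N => (N.take q, N.drop q)) x = (fun N => (N.take q, N.drop q)) y → x = y := by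
    intro x hx y hy hxy
    simp only [Prod.mk.injEq] at hxy
    rw [← x.take_append_drop q, ← y.take_append_drop q, hxy.1, hxy.2]
  have h1 : ∑ N ∈ M.flists, g (N.take q) (N.drop q)
      = ∑ p ∈ M.flists.image (fun N => (N.take q, N.drop q)), g p.1 p.2 :=
    (Finset.sum_image (f := fun p => g p.1 p.2) himg).symm
  have h2 : M.flists.image (fun N => (N.take q, N.drop q))
      = (subsq M q).biUnion (fun Q => Q.flists ×ˢ (M - Q).flists) := by
    ext ⟨u, v⟩
    simp only [Finset.mem_image, Finset.mem_biUnion, Finset.mem_product, Prod.mk.injEq]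
    constructor
    · rintro ⟨N, hN, h1', h2'⟩
      subst h1'; subst h2'
      have hadd := hsplit N hN
      have hlen : (N.take q).length = q := by
        rw [mem_lists] at hN
        have : N.length = Multiset.card M := by rw [← hN]; simp [Multiset.coe_card]
        simp [List.length_take]
        omega
      refine ⟨(↑(N.take q) : Multiset (ℕ×ℕ)), ?_, ?_, ?_⟩
      · rw [mem_subsq]
        constructor
        · rw [← hadd]; exact Multiset.le_add_right _ _
        · simp [Multiset.coe_card, hlen]
      · rw [mem_lists]
      · rw [mem_lists]
        exact eq_tsub_of_add_eq (by rw [add_comm]; exact hadd)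
    · rintro ⟨Q, hQ, hu, hv⟩
      rw [mem_subsq] at hQ
      rw [mem_lists] at hu hv
      have hul : u.length = q := by
        have := congrArg Multiset.card hu
        simpa [Multiset.coe_card, hQ.2] using this
      refine ⟨u ++ v, ?_, ?_, ?_⟩
      · rw [mem_lists, ← Multiset.coe_add, hu, hv]
        exact add_tsub_cancel_of_le hQ.1
      · rw [List.take_left' hul]
      · rw [List.drop_left' hul]
  have hdisj : (subsq M q : Set (Multiset (ℕ×ℕ))).PairwiseDisjoint
      (fun Q => Q.flists ×ˢ (M - Q).flists) := by
    intro Q1 h1' Q2 h2' hne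
    simp only [Function.onFun]
    rw [Finset.disjoint_left]
    rintro ⟨u, v⟩ ha hb
    rw [Finset.mem_product] at ha hb
    rw [mem_lists] at ha hb
    exact hne (ha.1 ▸ hb.1 ▸ rfl)
  rw [h1, h2, Finset.sum_biUnion hdisj]
  refine Finset.sum_congr rfl fun Q hQ => ?_
  rw [Finset.sum_product]

lemma PS_zero (s : ℕ) {M : Multiset (ℕ×ℕ)} (h : ∀ c ∈ M, c.2 = 0) : PS s M = 0 := by
  refine Finset.sum_eq_zero fun N hN => ?_
  refine Pmat_zero s N fun c hc => h c ?_
  rw [← mem_lists.mp hN]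
  exact Multiset.mem_coe.mpr hc

lemma PS_rec (s : ℕ) {M : Multiset (ℕ×ℕ)} (h : ¬ ∀ c ∈ M, c.2 = 0) :
    PS s M = (M.flists.card : ℚ) * Tm s M
      - ∑ Q ∈ subs M, PS s Q * (((M - Q).flists.card : ℚ)) * co s Q (M - Q) := by
  have hstep : ∀ N ∈ M.flists, Pmat s N = Tm s M
      - ∑ q ∈ Finset.Ico 1 (Multiset.card M),
          Pmat s (N.take q) * co s ↑(N.take q) ↑(N.drop q) := by
    intro N hN
    have hNM := mem_lists.mp hN
    have hlen : N.length = Multiset.card M := by rw [← hNM]; simp [Multiset.coe_card]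
    have hnz : ¬ ∀ c ∈ N, c.2 = 0 := by
      intro hall
      exact h fun c hc => hall c (by rwa [← hNM, Multiset.mem_coe] at hc)
    rw [Pmat_eq s N hnz, hNM, hlen]
  rw [PS, Finset.sum_congr rfl hstep, Finset.sum_sub_distrib, Finset.sum_const, nsmul_eq_mul]
  congr 1
  rw [Finset.sum_comm]
  have hq1 : ∀ q ∈ Finset.Ico 1 (Multiset.card M),
      ∑ N ∈ M.flists, Pmat s (N.take q) * co s ↑(N.take q) ↑(N.drop q)
        = ∑ Q ∈ subsq M q, PS s Q * (((M - Q).flists.card : ℚ)) * co s Q (M - Q) := by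
    intro q hq
    rw [Finset.mem_Ico] at hq
    rw [sum_take_drop M q (le_of_lt hq.2) (fun u v => Pmat s u * co s ↑u ↑v)]
    refine Finset.sum_congr rfl fun Q hQ => ?_
    have hinner : ∀ u ∈ Q.flists, ∑ v ∈ (M - Q).flists, Pmat s u * co s ↑u ↑v
        = Pmat s u * ((((M - Q).flists.card : ℚ)) * co s Q (M - Q)) := by
      intro u hu
      have huQ := mem_lists.mp hu
      rw [Finset.sum_congr rfl (fun v hv => by rw [mem_lists.mp hv, huQ]),
        Finset.sum_const, nsmul_eq_mul]
      ring
    rw [Finset.sum_congr rfl hinner, ← Finset.sum_mul]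
    simp only [PS]
    ring
  rw [Finset.sum_congr rfl hq1]
  have hU : subs M = (Finset.Ico 1 (Multiset.card M)).biUnion (fun q => subsq M q) := by
    ext Q
    simp only [mem_subs, Finset.mem_biUnion, mem_subsq, Finset.mem_Ico]
    constructor
    · rintro ⟨hle, h0, hlt⟩
      have : 1 ≤ Multiset.card Q := by
        rcases Nat.eq_zero_or_pos (Multiset.card Q) with h' | h'
        · exact absurd (Multiset.card_eq_zero.mp h') h0
        · exact h'
      exact ⟨Multiset.card Q, ⟨this, hlt⟩, hle, rfl⟩
    · rintro ⟨q, ⟨hq1', hq2'⟩, hle, hcard⟩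
      refine ⟨hle, ?_, by omega⟩
      intro h0
      rw [h0] at hcard
      simp at hcard
      omega
  have hdisj2 : ((Finset.Ico 1 (Multiset.card M)) : Set ℕ).PairwiseDisjoint
      (fun q => subsq M q) := by
    intro q1 _ q2 _ hne
    simp only [Function.onFun]
    rw [Finset.disjoint_left]
    intro Q ha hb
    rw [mem_subsq] at ha hb
    exact hne (ha.2 ▸ hb.2 ▸ rfl)
  rw [hU, Finset.sum_biUnion hdisj2]

lemma Cz_neg {a : ℤ} (h : a < 0) (b : ℕ) : Cz a b = 0 := by
  rw [Cz, if_neg (not_le.mpr h)]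

lemma Cz_zero_right (a : ℤ) : Cz a 0 = if 0 ≤ a then 1 else 0 := by
  rw [Cz]
  split_ifs <;> simp

lemma Sm_nonneg (M : Multiset (ℕ×ℕ)) : 0 ≤ Sm M := by
  refine Multiset.sum_nonneg fun x hx => ?_
  rw [Multiset.mem_map] at hx
  obtain ⟨c, _, rfl⟩ := hx
  positivity

lemma Sm_add (R Z : Multiset (ℕ×ℕ)) : Sm (R + Z) = Sm R + Sm Z := by
  simp [Sm]

lemma Jm_add_zero (R Z : Multiset (ℕ×ℕ)) (hz : ∀ c ∈ Z, c.2 = 0) : Jm (R + Z) = Jm R := by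
  have : (Z.map Prod.snd).sum = 0 := by
    refine Multiset.sum_eq_zero fun x hx => ?_
    rw [Multiset.mem_map] at hx
    obtain ⟨c, hc, rfl⟩ := hx
    exact hz c hc
  simp [Jm, this]

lemma Dm_add_zero (R Z : Multiset (ℕ×ℕ)) (hz : ∀ c ∈ Z, c.2 = 0) : Dm (R + Z) = Dm R := by
  have : (Z.map (fun c => ((c.2.factorial : ℚ)))).prod = 1 := by
    refine Multiset.prod_eq_one fun x hx => ?_
    rw [Multiset.mem_map] at hx
    obtain ⟨c, hc, rfl⟩ := hx
    rw [hz c hc]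
    norm_num
  simp [Dm, this]

lemma sub_add_eq {A' A : Multiset (ℕ×ℕ)} (Bz : Multiset (ℕ×ℕ)) (h : A' ≤ A) :
    (A + Bz) - A' = (A - A') + Bz := by
  ext a
  have hle := Multiset.le_iff_count.mp h a
  simp only [Multiset.count_sub, Multiset.count_add]
  omega

lemma coeff_ratio (R Z : Multiset (ℕ×ℕ)) (h : ∀ x ∈ R, x ∉ Z) :
    (((R+Z).flists.card : ℚ)) * (((Multiset.card (R+Z)).factorial : ℚ))⁻¹
      = ((Multiset.card Z).factorial : ℚ)⁻¹ * (Z.flists.card : ℚ)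
        * ((R.flists.card : ℚ) * (((Multiset.card R).factorial : ℚ))⁻¹) := by
  have e := card_lists_add R Z h
  have h1 : ((Multiset.card R).factorial : ℚ) ≠ 0 := Nat.cast_ne_zero.mpr (Nat.factorial_ne_zero _)
  have h2 : ((Multiset.card Z).factorial : ℚ) ≠ 0 := Nat.cast_ne_zero.mpr (Nat.factorial_ne_zero _)
  have h3 : (((Multiset.card R) + (Multiset.card Z)).factorial : ℚ) ≠ 0 :=
    Nat.cast_ne_zero.mpr (Nat.factorial_ne_zero _)
  rw [Multiset.card_add]
  field_simp
  linear_combination e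

lemma main (s : ℕ) : ∀ (n : ℕ) (A Bz : Multiset (ℕ×ℕ)),
    Multiset.card A + Multiset.card Bz ≤ n →
    A ≠ 0 → Bz ≠ 0 → (∀ c ∈ A, c.2 ≠ 0) → (∀ c ∈ Bz, c.2 = 0) →
    PS s (A + Bz) = if Sm A ≤ (s:ℤ) then 0
      else ((Multiset.card Bz).factorial : ℚ)⁻¹ * (Bz.flists.card : ℚ) * PS s A := by
  intro n
  induction n with
  | zero =>
    intro A Bz hn hA0 _ _ _
    exact absurd hn (by have := Multiset.card_pos.mpr hA0; omega)
  | succ n IH =>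
    intro A Bz hn hA0 hB0 hA hB
    have hkpos : 0 < Multiset.card Bz := Multiset.card_pos.mpr hB0
    have hmpos : 0 < Multiset.card A := Multiset.card_pos.mpr hA0
    set M := A + Bz with hMdef
    have hcardM : Multiset.card M = Multiset.card A + Multiset.card Bz := Multiset.card_add A Bz
    have hfAnotz : A.filter (fun c => ¬ c.2 = 0) = A := Multiset.filter_eq_self.mpr hA
    have hfBnotz : Bz.filter (fun c => ¬ c.2 = 0) = 0 :=
      Multiset.filter_eq_nil.mpr (fun c hc h' => h' (hB c hc))
    have hMnotz : M.filter (fun c => ¬ c.2 = 0) = A := by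
      rw [hMdef, Multiset.filter_add, hfAnotz, hfBnotz, add_zero]
    have hMnz : ¬ ∀ c ∈ M, c.2 = 0 := by
      intro hall
      obtain ⟨c, hc⟩ := Multiset.exists_mem_of_ne_zero hA0
      exact hA c hc (hall c (Multiset.mem_add.mpr (Or.inl hc)))
    have hAnz : ¬ ∀ c ∈ A, c.2 = 0 := by
      intro hall
      obtain ⟨c, hc⟩ := Multiset.exists_mem_of_ne_zero hA0
      exact hA c hc (hall c hc)
    have hdisjAB : ∀ x ∈ A, x ∉ Bz := fun x hx hz => hA x hx (hB x hz)
    have hJB : Jm Bz = 0 := by have := Jm_add_zero 0 Bz hB; simpa [Jm] using this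
    have hDB : Dm Bz = 1 := by have := Dm_add_zero 0 Bz hB; simpa [Dm] using this
    -- Step 1: recurrence for M
    rw [PS_rec s hMnz]
    -- Step 2: vanishing of terms with a zero column in Q
    have hvan : ∀ Q ∈ subs M,
        PS s Q * (((M - Q).flists.card : ℚ)) * co s Q (M - Q) ≠ 0 →
        Q.filter (fun c => c.2 = 0) = 0 := by
      intro Q hQ hne
      by_contra hBne
      apply hne
      obtain ⟨hle, hQ0, hcard⟩ := mem_subs.mp hQ
      set A' := Q.filter (fun c => ¬ c.2 = 0) with hA'def
      set B' := Q.filter (fun c => c.2 = 0) with hB'def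
      have hQsplit : B' + A' = Q := Multiset.filter_add_not _ Q
      have hA'mem : ∀ c ∈ A', ¬ c.2 = 0 := fun c hc => (Multiset.mem_filter.mp hc).2
      have hB'mem : ∀ c ∈ B', c.2 = 0 := fun c hc => (Multiset.mem_filter.mp hc).2
      rcases eq_or_ne A' 0 with hA'0 | hA'0
      · have : PS s Q = 0 := by
          refine PS_zero s fun c hc => ?_
          rw [← hQsplit, hA'0, add_zero] at hc
          exact hB'mem c hc
        rw [this, zero_mul, zero_mul]
      · have hIH := IH A' B' ?hcard hA'0 hBne hA'mem hB'mem
        case hcard =>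
          have : Multiset.card A' + Multiset.card B' = Multiset.card Q := by
            rw [← hQsplit, Multiset.card_add]; ring
          omega
        rw [add_comm B' A'] at hQsplit
        rw [hQsplit] at hIH
        by_cases hcz : Sm A' ≤ (s:ℤ)
        · rw [hIH, if_pos hcz, zero_mul, zero_mul]
        · have hSmQ : Sm A' ≤ Sm Q := by
            rw [← hQsplit, Sm_add]
            have := Sm_nonneg B'
            omega
          have : (s:ℤ) - Sm Q < 0 := by
            push_neg at hcz
            omega
          simp only [co]
          rw [Cz_neg this]
          ring
    rw [← Finset.sum_filter_of_ne hvan]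
    -- Step 3: identify remaining index set with nonzero submultisets of A
    have hQF : (subs M).filter (fun Q => Q.filter (fun c => c.2 = 0) = 0)
        = A.powerset.toFinset.filter (fun Q => Q ≠ 0) := by
      ext Q
      simp only [Finset.mem_filter, mem_subs, Multiset.mem_toFinset, Multiset.mem_powerset]
      constructor
      · rintro ⟨⟨hle, hQ0, _⟩, hz⟩
        refine ⟨?_, hQ0⟩
        have : Q.filter (fun c => ¬ c.2 = 0) = Q := by
          have h1 := Multiset.filter_add_not (fun c => c.2 = 0) Q
          rw [hz, zero_add] at h1
          exact h1
        rw [← this, ← hMnotz]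
        exact Multiset.filter_le_filter _ hle
      · rintro ⟨hle, hQ0⟩
        refine ⟨⟨le_trans hle (Multiset.le_add_right _ _), hQ0, ?_⟩, ?_⟩
        · have := Multiset.card_le_card hle
          omega
        · exact Multiset.filter_eq_nil.mpr (fun c hc => hA c (Multiset.mem_of_le hle hc))
    rw [hQF]
    -- Step 4: split off the term Q = A
    have hAmem : A ∈ A.powerset.toFinset.filter (fun Q => Q ≠ 0) := by
      simp [Multiset.mem_powerset, hA0]
    rw [← Finset.add_sum_erase _ _ hAmem]
    have herase : (A.powerset.toFinset.filter (fun Q => Q ≠ 0)).erase A = subs A := by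
      ext Q
      simp only [Finset.mem_erase, Finset.mem_filter, mem_subs, Multiset.mem_toFinset,
        Multiset.mem_powerset]
      constructor
      · rintro ⟨hne, hle, hQ0⟩
        exact ⟨hle, hQ0, Multiset.card_lt_card (lt_of_le_of_ne hle hne)⟩
      · rintro ⟨hle, hQ0, hcard⟩
        exact ⟨fun h => by subst h; omega, hle, hQ0⟩
    rw [herase]
    -- Step 5: evaluate the term Q = A
    have hMA : M - A = Bz := by rw [hMdef]; exact add_tsub_cancel_left A Bz
    have hcoA : co s A (M - A) = ((Multiset.card Bz).factorial : ℚ)⁻¹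
        * (if Sm A ≤ (s:ℤ) then 1 else 0) := by
      rw [hMA]
      simp only [co, hJB, hDB, Nat.factorial_zero, Nat.cast_one, div_one, mul_one, Cz_zero_right]
      rw [if_congr (sub_nonneg (a := (s:ℤ)) (b := Sm A)) rfl rfl]
    have hterm : ∀ Q ∈ subs A,
        PS s Q * (((M - Q).flists.card : ℚ)) * co s Q (M - Q)
          = ((Multiset.card Bz).factorial : ℚ)⁻¹ * (Bz.flists.card : ℚ)
            * (PS s Q * (((A - Q).flists.card : ℚ)) * co s Q (A - Q)) := by
      intro Q hQ
      obtain ⟨hle, hQ0, hcard⟩ := mem_subs.mp hQ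
      have hMQ : M - Q = (A - Q) + Bz := sub_add_eq Bz hle
      have hdisj : ∀ x ∈ A - Q, x ∉ Bz :=
        fun x hx => hdisjAB x (Multiset.mem_of_le tsub_le_self hx)
      have hratio := coeff_ratio (A - Q) Bz hdisj
      rw [hMQ]
      simp only [co, Jm_add_zero _ _ hB, Dm_add_zero _ _ hB, Multiset.card_add] at *
      linear_combination (PS s Q * (Cz ((s:ℤ) - Sm Q) (Jm (A - Q))
        * (((Jm (A - Q)).factorial : ℚ)) / Dm (A - Q))) * hratio
    have hhead : ((M.flists.card : ℚ)) * Tm s M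
        = ((Multiset.card Bz).factorial : ℚ)⁻¹ * (Bz.flists.card : ℚ)
          * ((A.flists.card : ℚ) * Tm s A) := by
      have hratio := coeff_ratio A Bz hdisjAB
      rw [hMdef]
      simp only [Tm, Jm_add_zero _ _ hB, Dm_add_zero _ _ hB, Multiset.card_add] at *
      linear_combination (Cz (s:ℤ) (Jm A) * (((Jm A).factorial : ℚ)) / Dm A) * hratio
    have hrecA := PS_rec s hAnz
    rw [Finset.sum_congr rfl hterm, ← Finset.mul_sum, hhead, hcoA, hMA]
    split_ifs with hif
    · linear_combination
        (-(((Multiset.card Bz).factorial : ℚ)⁻¹ * (Bz.flists.card : ℚ))) * hrecA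
    · linear_combination
        (-(((Multiset.card Bz).factorial : ℚ)⁻¹ * (Bz.flists.card : ℚ))) * hrecA

end L21

lemma colPerms_eq (L : List (ℕ × ℕ)) :
    colPerms L = Multiset.flists (↑L : Multiset (ℕ × ℕ)) := by
  ext N
  rw [colPerms, List.mem_toFinset, List.mem_permutations, L21.mem_lists]
  exact ⟨fun h => Multiset.coe_eq_coe.mpr h, fun h => Multiset.coe_eq_coe.mp h⟩

lemma PmatSym_eq_PS (s : ℕ) (L : List (ℕ × ℕ)) :
    PmatSym s L = L21.PS s (↑L : Multiset (ℕ × ℕ)) := by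
  rw [PmatSym, L21.PS, colPerms_eq]

/-- Lemma 2.1: for a matrix with columns
`(i₁;j₁),…,(iₘ;jₘ)` (given by the list `A`, all entries positive, `m ≥ 1`)
together with columns `(i_{m+1};0),…,(i_{m+k};0)` (given by the list `B` of
positive tops, `k ≥ 1`), the symmetrized sum `P_s[⋯]` equals `0` if
`s ≥ i₁+⋯+iₘ+j₁+⋯+jₘ`, and equals
`(1/k!)·‖(i_{m+1} … i_{m+k}; 0 … 0)‖ · P_s[(i₁ … iₘ; j₁ … jₘ)]` otherwise. -/
theorem Pmat_lemma21 (s : ℕ) (A : List (ℕ × ℕ)) (B : List ℕ)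
    (hm : A ≠ []) (hk : B ≠ [])
    (hA : ∀ c ∈ A, 1 ≤ c.1 ∧ 1 ≤ c.2) (hB : ∀ b ∈ B, 1 ≤ b) :
    PmatSym s (A ++ B.map (fun b => (b, 0))) =
      if (A.map (fun c => c.1 + c.2)).sum ≤ s then 0
      else ((B.length.factorial : ℚ))⁻¹
            * ((colPerms (B.map (fun b => (b, 0)))).card : ℚ)
            * PmatSym s A := by
  classical
  set Bl := B.map (fun b => (b, 0)) with hBldef
  have hcoe : (↑(A ++ Bl) : Multiset (ℕ × ℕ)) = (↑A : Multiset (ℕ × ℕ)) + ↑Bl :=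
    (Multiset.coe_add A Bl).symm
  have hcond : L21.Sm (↑A : Multiset (ℕ × ℕ)) ≤ (s:ℤ) ↔ (A.map (fun c => c.1 + c.2)).sum ≤ s := by
    have : L21.Sm (↑A : Multiset (ℕ × ℕ)) = (((A.map (fun c => c.1 + c.2)).sum : ℕ) : ℤ) := by
      rw [L21.Sm_coe]
      rw [Nat.cast_list_sum, List.map_map]
      congr 1
    rw [this]
    exact_mod_cast Int.ofNat_le
  have hmain := L21.main s (A.length + Bl.length) (↑A) (↑Bl) ?_ ?_ ?_ ?_ ?_
  · rw [PmatSym_eq_PS, hcoe, hmain, PmatSym_eq_PS]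
    have hcardB : Multiset.card (↑Bl : Multiset (ℕ × ℕ)) = B.length := by
      rw [Multiset.coe_card, hBldef, List.length_map]
    have hlistsB : (Multiset.flists (↑Bl : Multiset (ℕ × ℕ))).card = (colPerms Bl).card := by
      rw [colPerms_eq]
    by_cases h : (A.map (fun c => c.1 + c.2)).sum ≤ s
    · rw [if_pos h, if_pos (hcond.mpr h)]
    · rw [if_neg h, if_neg (fun hc => h (hcond.mp hc)), hcardB, hlistsB]
  · simp [Multiset.coe_card]
  · rw [Ne, Multiset.coe_eq_zero]; exact hm
  · rw [Ne, Multiset.coe_eq_zero, hBldef]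
    simp [hk]
  · intro c hc
    have : c ∈ A := by exact_mod_cast hc
    have := (hA c this).2
    omega
  · intro c hc
    have : c ∈ Bl := by exact_mod_cast hc
    rw [hBldef, List.mem_map] at this
    obtain ⟨b, _, rfl⟩ := this
    rfl
end

section
/- Let W satisfy the string equation ∂W = (1/2)Σ_{i+j=n} ij x_i x_j + Σ_{i≥1}(i+n)x_{i+n}∂_i W with W(0) = ∂_i W(0) = 0. Then for every ℓ with 1 ≤ ℓ < n−1 and every r ≥ 2, the restriction of ∂^r ∂_ℓ W to the set L_0 = {(x_1,...,x_{n−1},0,0,...)} vanishes, and ∂^r ∂_{n−1} W vanishes on L_0 for all r ≥ 3. -/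
/-- The partial derivative `∂_i` of a formal power series in the variables
`x_0, x_1, x_2, …` (only `x_1, x_2, …` are used), defined coefficientwise. -/
noncomputable def pd (i : ℕ) (f : MvPowerSeries ℕ ℚ) : MvPowerSeries ℕ ℚ :=
  fun m => ((m i : ℚ) + 1) * f (m + Finsupp.single i 1)

/-- The quadratic term `(1/2) Σ_{i+j=n, i,j≥1} i·j·x_i·x_j` of the string
equation. -/
noncomputable def stringQuad (n : ℕ) : MvPowerSeries ℕ ℚ :=
  (1/2 : ℚ) • ∑ p ∈ (Finset.HasAntidiagonal.antidiagonal n).filter (fun p => 1 ≤ p.1 ∧ 1 ≤ p.2),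
    ((p.1 * p.2 : ℕ) : ℚ) • (MvPowerSeries.X p.1 * MvPowerSeries.X p.2)

/-- The series `Σ_{i=1}^∞ (i+n)·x_{i+n}·∂_i W`, defined coefficientwise (for a
fixed monomial `m` only the finitely many `i` with `i+n ∈ supp m` contribute,
since `x_{i+n}` divides the `i`-th summand). -/
noncomputable def stringTail (n : ℕ) (W : MvPowerSeries ℕ ℚ) : MvPowerSeries ℕ ℚ :=
  fun m => ∑ j ∈ m.support.filter (fun j => n < j),
    (j : ℚ) * MvPowerSeries.coeff m (MvPowerSeries.X j * pd (j - n) W)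

/-- The string equation
`∂W = (1/2) Σ_{i+j=n} i j x_i x_j + Σ_{i≥1} (i+n) x_{i+n} ∂_i W`. -/
def StringEq (n : ℕ) (W : MvPowerSeries ℕ ℚ) : Prop :=
  pd 1 W = stringQuad n + stringTail n W


namespace StringAux

def deg (m : ℕ →₀ ℕ) : ℕ := m.sum fun _ k => k
def wdeg (m : ℕ →₀ ℕ) : ℕ := m.sum fun j k => j * k

lemma deg_add (a b : ℕ →₀ ℕ) : deg (a + b) = deg a + deg b :=
  Finsupp.sum_add_index' (fun _ => rfl) (fun _ _ _ => rfl)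

lemma wdeg_add (a b : ℕ →₀ ℕ) : wdeg (a + b) = wdeg a + wdeg b :=
  Finsupp.sum_add_index' (fun a => by simp) (fun a b c => by ring)

lemma deg_single (i k : ℕ) : deg (Finsupp.single i k) = k :=
  Finsupp.sum_single_index rfl

lemma wdeg_single (i k : ℕ) : wdeg (Finsupp.single i k) = i * k :=
  Finsupp.sum_single_index (by simp)

lemma wdeg_zero : wdeg 0 = 0 := rfl

lemma eq_zero_of_deg_eq_zero {m : ℕ →₀ ℕ} (h : deg m = 0) : m = 0 := by
  ext j
  simp only [Finsupp.coe_zero, Pi.zero_apply]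
  by_contra hj
  have hmem : j ∈ m.support := Finsupp.mem_support_iff.2 hj
  have : m j ≤ deg m := Finset.single_le_sum (fun _ _ => Nat.zero_le _) hmem
  omega

lemma coeff_pd (i : ℕ) (f : MvPowerSeries ℕ ℚ) (m : ℕ →₀ ℕ) :
    MvPowerSeries.coeff m (pd i f)
      = ((m i : ℚ) + 1) * MvPowerSeries.coeff (m + Finsupp.single i 1) f := rfl

lemma coeff_stringQuad_eq_zero (n : ℕ) (m : ℕ →₀ ℕ)
    (h : ¬(deg m = 2 ∧ wdeg m = n)) :
    MvPowerSeries.coeff m (stringQuad n) = 0 := by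
  rw [stringQuad, map_smul, map_sum]
  rw [Finset.sum_eq_zero, smul_zero]
  intro p hp
  rw [map_smul]
  have hX : (MvPowerSeries.X p.1 * MvPowerSeries.X p.2 : MvPowerSeries ℕ ℚ)
      = MvPowerSeries.monomial (Finsupp.single p.1 1 + Finsupp.single p.2 1) 1 := by
    rw [MvPowerSeries.X_def, MvPowerSeries.X_def, MvPowerSeries.monomial_mul_monomial, one_mul]
  rw [hX, MvPowerSeries.coeff_monomial, if_neg, smul_zero]
  intro hm
  simp only [Finset.mem_filter, Finset.mem_antidiagonal] at hp
  apply h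
  rw [hm]
  constructor
  · rw [deg_add, deg_single, deg_single]
  · rw [wdeg_add, wdeg_single, wdeg_single]
    simpa using hp.1

lemma key (n : ℕ) (W : MvPowerSeries ℕ ℚ) (hstr : StringEq n W) (m : ℕ →₀ ℕ)
    (hm : ∀ j ∈ m.support, 1 ≤ j ∧ j < n) :
    ((m 1 : ℚ) + 1) * MvPowerSeries.coeff (m + Finsupp.single 1 1) W
      = MvPowerSeries.coeff m (stringQuad n) := by
  have h : pd 1 W = stringQuad n + stringTail n W := hstr
  have h2 := congrArg (MvPowerSeries.coeff m) h
  rw [map_add] at h2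
  have htail : MvPowerSeries.coeff m (stringTail n W)
      = ∑ j ∈ m.support.filter (fun j => n < j),
        (j : ℚ) * MvPowerSeries.coeff m (MvPowerSeries.X j * pd (j - n) W) := rfl
  rw [htail, Finset.filter_false_of_mem, Finset.sum_empty, add_zero] at h2
  · rw [← h2]; rfl
  · intro j hj
    have := (hm j hj).2
    omega

lemma vanish (n : ℕ) (W : MvPowerSeries ℕ ℚ) (hstr : StringEq n W) (m : ℕ →₀ ℕ)
    (hm : ∀ j ∈ m.support, 1 ≤ j ∧ j < n)
    (hne : ¬(deg m = 2 ∧ wdeg m = n)) :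
    MvPowerSeries.coeff (m + Finsupp.single 1 1) W = 0 := by
  have hk := key n W hstr m hm
  rw [coeff_stringQuad_eq_zero n m hne] at hk
  have hpos : ((m 1 : ℚ) + 1) ≠ 0 := by positivity
  exact (mul_eq_zero.1 hk).resolve_left hpos

lemma coeff_iter_pd_one (f : MvPowerSeries ℕ ℚ) :
    ∀ (r : ℕ) (m : ℕ →₀ ℕ), MvPowerSeries.coeff (m + Finsupp.single 1 r) f = 0 →
      MvPowerSeries.coeff m ((pd 1)^[r] f) = 0
  | 0, m, h => by simpa using h
  | (r+1), m, h => by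
    rw [Function.iterate_succ_apply]
    apply coeff_iter_pd_one (pd 1 f) r m
    rw [coeff_pd, mul_eq_zero]
    right
    rw [add_assoc, ← Finsupp.single_add]
    exact h

end StringAux

/-- if `W` satisfies the string equation with `W(0) = 0` and
`∂_i W(0) = 0`, then for every `1 ≤ ℓ < n−1` and `r ≥ 2` the restriction of
`∂^r ∂_ℓ W` to `L₀ = {(x₁,…,x_{n−1},0,0,…)}` vanishes (i.e. all its
coefficients at monomials supported on the variables `x₁,…,x_{n−1}` vanish),
and `∂^r ∂_{n−1} W` vanishes on `L₀` for all `r ≥ 3`. -/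
theorem string_vanishing_on_L0 (n : ℕ) (hn : 2 ≤ n) (W : MvPowerSeries ℕ ℚ)
    (h0 : MvPowerSeries.coeff 0 W = 0)
    (h1 : ∀ i, 1 ≤ i → MvPowerSeries.coeff 0 (pd i W) = 0)
    (hstr : StringEq n W) :
    (∀ ℓ r, 1 ≤ ℓ → ℓ < n - 1 → 2 ≤ r →
      ∀ m : ℕ →₀ ℕ, (∀ j ∈ m.support, 1 ≤ j ∧ j < n) →
        MvPowerSeries.coeff m ((pd 1)^[r] (pd ℓ W)) = 0) ∧
    (∀ r, 3 ≤ r →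
      ∀ m : ℕ →₀ ℕ, (∀ j ∈ m.support, 1 ≤ j ∧ j < n) →
        MvPowerSeries.coeff m ((pd 1)^[r] (pd (n - 1) W)) = 0) := by
  constructor
  · intro ℓ r hℓ1 hℓn hr m hm
    apply StringAux.coeff_iter_pd_one
    rw [StringAux.coeff_pd, mul_eq_zero]
    right
    have hM : m + Finsupp.single 1 r + Finsupp.single ℓ 1
        = (m + Finsupp.single 1 (r-1) + Finsupp.single ℓ 1) + Finsupp.single 1 1 := by
      have : Finsupp.single 1 r = Finsupp.single 1 (r-1) + Finsupp.single 1 1 := by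
        rw [← Finsupp.single_add]
        congr 1
        omega
      rw [this]
      abel
    rw [hM]
    apply StringAux.vanish n W hstr
    · intro j hj
      rw [Finsupp.mem_support_iff, Finsupp.add_apply, Finsupp.add_apply] at hj
      by_cases h1 : j = 1
      · subst h1; omega
      by_cases h2 : j = ℓ
      · subst h2; omega
      have e1 : Finsupp.single 1 (r-1) j = 0 := Finsupp.single_eq_of_ne h1
      have e2 : Finsupp.single ℓ 1 j = 0 := Finsupp.single_eq_of_ne h2
      have : m j ≠ 0 := by omega
      exact hm j (Finsupp.mem_support_iff.2 this)
    · rintro ⟨hd, hw⟩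
      rw [StringAux.deg_add, StringAux.deg_add, StringAux.deg_single, StringAux.deg_single] at hd
      have hdm : StringAux.deg m = 0 := by omega
      have hm0 : m = 0 := StringAux.eq_zero_of_deg_eq_zero hdm
      rw [StringAux.wdeg_add, StringAux.wdeg_add, StringAux.wdeg_single, StringAux.wdeg_single,
        hm0, StringAux.wdeg_zero] at hw
      omega
  · intro r hr m hm
    apply StringAux.coeff_iter_pd_one
    rw [StringAux.coeff_pd, mul_eq_zero]
    right
    have hM : m + Finsupp.single 1 r + Finsupp.single (n-1) 1
        = (m + Finsupp.single 1 (r-1) + Finsupp.single (n-1) 1) + Finsupp.single 1 1 := by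
      have : Finsupp.single 1 r = Finsupp.single 1 (r-1) + Finsupp.single 1 1 := by
        rw [← Finsupp.single_add]
        congr 1
        omega
      rw [this]
      abel
    rw [hM]
    apply StringAux.vanish n W hstr
    · intro j hj
      rw [Finsupp.mem_support_iff, Finsupp.add_apply, Finsupp.add_apply] at hj
      by_cases h1 : j = 1
      · subst h1; omega
      by_cases h2 : j = n - 1
      · subst h2; omega
      have e1 : Finsupp.single 1 (r-1) j = 0 := Finsupp.single_eq_of_ne h1
      have e2 : Finsupp.single (n-1) 1 j = 0 := Finsupp.single_eq_of_ne h2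
      have : m j ≠ 0 := by omega
      exact hm j (Finsupp.mem_support_iff.2 this)
    · rintro ⟨hd, hw⟩
      rw [StringAux.deg_add, StringAux.deg_add, StringAux.deg_single, StringAux.deg_single] at hd
      omega
end
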